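/- The marginal mean at node j is finite under the CONGA model: E[X_j] = Σ_{x∈ℕ^P} x_j p_{α,β}(x) < ∞. -/

import Mathlib

open scoped BigOperators

noncomputable def nodeSum {P : ℕ} (α : Fin P → ℝ) (x : Fin P → ℕ) : ℝ :=
  ∑ j, (α j * (x j : ℝ) - Real.log (Nat.factorial (x j)))

noncomputable def edgeSum {P : ℕ} (β : Fin P → Fin P → ℝ) (F : ℕ → ℝ) (x : Fin P → ℕ) : ℝ :=
  ∑ j, ∑ l, if j < l then β j l * F (x j) * F (x l) else 0

/-- Unnormalized weight of the pairwise MRF for counts. -/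
noncomputable def w {P : ℕ} (α : Fin P → ℝ) (β : Fin P → Fin P → ℝ) (F : ℕ → ℝ)
    (x : Fin P → ℕ) : ℝ :=
  Real.exp (nodeSum α x - edgeSum β F x)

/-- Normalizing constant A(α,β). -/
noncomputable def Anorm {P : ℕ} (α : Fin P → ℝ) (β : Fin P → Fin P → ℝ) (F : ℕ → ℝ) : ℝ :=
  ∑' x : Fin P → ℕ, w α β F x

/-- The transformation F(x) = (arctan x)^θ. -/
noncomputable def Fpow (θ : ℝ) : ℕ → ℝ := fun n => Real.arctan (n : ℝ) ^ θ

lemma summable_pi_prod : ∀ (P : ℕ) (f : Fin P → ℕ → ℝ), (∀ i n, 0 ≤ f i n) →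
    (∀ i, Summable (f i)) → Summable (fun x : Fin P → ℕ => ∏ i, f i (x i)) := by
  intro P
  induction P with
  | zero => intro f _ _; exact Summable.of_finite
  | succ n ih =>
      intro f hn hs
      rw [← Equiv.summable_iff (Fin.consEquiv (fun _ : Fin (n+1) => ℕ))]
      have heq : ((fun x : Fin (n+1) → ℕ => ∏ i, f i (x i)) ∘ (Fin.consEquiv (fun _ : Fin (n+1) => ℕ)))
          = fun p : ℕ × (Fin n → ℕ) => f 0 p.1 * ∏ i : Fin n, f i.succ (p.2 i) := by
        funext p
        simp [Fin.consEquiv, Fin.prod_univ_succ]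
      rw [heq]
      exact Summable.mul_of_nonneg (f := f 0)
        (g := fun y : Fin n → ℕ => ∏ i : Fin n, f i.succ (y i)) (hs 0)
        (ih _ (fun i m => hn i.succ m) (fun i => hs i.succ))
        (fun m => hn 0 m) (fun p => Finset.prod_nonneg fun i _ => hn i.succ _)

lemma summable_g (a : ℝ) :
    Summable (fun n : ℕ => ((n : ℝ) + 1) * Real.exp (a * n) / n.factorial) := by
  refine Summable.of_nonneg_of_le (fun n => by positivity)
    (fun n => ?_) (Real.summable_pow_div_factorial (2 * Real.exp a))
  have h1 : ((n : ℝ) + 1) ≤ 2 ^ n := by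
    have h := Nat.lt_two_pow_self (n := n)
    have h' : n + 1 ≤ 2 ^ n := h
    exact_mod_cast h'
  have h2 : Real.exp (a * n) = Real.exp a ^ n := by
    rw [← Real.exp_nat_mul]; ring_nf
  rw [h2, mul_pow]
  gcongr

theorem stmt10 (P : ℕ) (α : Fin P → ℝ) (β : Fin P → Fin P → ℝ)
    (F : ℕ → ℝ) (U : ℝ) (hF : ∀ x, |F x| ≤ U) (j : Fin P) :
    Summable (fun x : Fin P → ℕ => (x j : ℝ) * (w α β F x / Anorm α β F)) := by
  have hU : 0 ≤ U := le_trans (abs_nonneg _) (hF 0)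
  set C : ℝ := ∑ a : Fin P, ∑ b : Fin P, |β a b| * U ^ 2 with hC
  -- bound on edgeSum
  have hedge : ∀ x : Fin P → ℕ, |edgeSum β F x| ≤ C := by
    intro x
    refine le_trans (Finset.abs_sum_le_sum_abs _ _) (Finset.sum_le_sum fun a _ => ?_)
    refine le_trans (Finset.abs_sum_le_sum_abs _ _) (Finset.sum_le_sum fun b _ => ?_)
    by_cases h : a < b
    · simp only [h, if_true, abs_mul]
      calc |β a b| * |F (x a)| * |F (x b)| ≤ |β a b| * U * U := by
            gcongr <;> [exact hF _; exact hF _]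
        _ = |β a b| * U ^ 2 := by ring
    · simp only [h, if_false, abs_zero]
      positivity
  set g : Fin P → ℕ → ℝ := fun i n => ((n : ℝ) + 1) * Real.exp (α i * n) / n.factorial with hg
  have hgnn : ∀ i n, 0 ≤ g i n := fun i n => by positivity
  have key : ∀ x : Fin P → ℕ, (x j : ℝ) * w α β F x ≤ Real.exp C * ∏ i, g i (x i) := by
    intro x
    have hw : w α β F x ≤ Real.exp C * Real.exp (nodeSum α x) := by
      rw [w, ← Real.exp_add]
      apply Real.exp_le_exp.2
      have := (abs_le.1 (hedge x)).1
      linarith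
    have hnode : Real.exp (nodeSum α x) = ∏ i, Real.exp (α i * x i) / (x i).factorial := by
      rw [nodeSum, Real.exp_sum]
      refine Finset.prod_congr rfl fun i _ => ?_
      rw [Real.exp_sub, Real.exp_log]
      exact_mod_cast Nat.factorial_pos (x i)
    calc (x j : ℝ) * w α β F x
        ≤ (x j : ℝ) * (Real.exp C * Real.exp (nodeSum α x)) := by
          apply mul_le_mul_of_nonneg_left hw (Nat.cast_nonneg _)
      _ = Real.exp C * ((x j : ℝ) * ∏ i, Real.exp (α i * x i) / (x i).factorial) := by
          rw [hnode]; ring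
      _ ≤ Real.exp C * ∏ i, g i (x i) := by
          apply mul_le_mul_of_nonneg_left _ (Real.exp_pos C).le
          have : (x j : ℝ) * ∏ i, Real.exp (α i * x i) / (x i).factorial
              = ∏ i, (if i = j then (x j : ℝ) else 1) * (Real.exp (α i * x i) / (x i).factorial) := by
            rw [Finset.prod_mul_distrib, Finset.prod_ite_eq' Finset.univ j
              (fun _ => (x j : ℝ))]
            simp
          rw [this]
          refine Finset.prod_le_prod (fun i _ => by positivity) (fun i _ => ?_)
          have hle : (if i = j then ((x j : ℝ)) else 1) ≤ (x i : ℝ) + 1 := by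
            by_cases h : i = j
            · subst h; simp
            · simp only [h, if_false]
              linarith [(Nat.cast_nonneg (x i) : (0:ℝ) ≤ x i)]
          calc (if i = j then ((x j : ℝ)) else 1) * (Real.exp (α i * (x i)) / (x i).factorial)
              ≤ ((x i : ℝ) + 1) * (Real.exp (α i * (x i)) / (x i).factorial) :=
                mul_le_mul_of_nonneg_right hle (by positivity)
            _ = g i (x i) := by rw [hg]; ring
  have hwsum : Summable (fun x : Fin P → ℕ => (x j : ℝ) * w α β F x) := by
    refine Summable.of_nonneg_of_le
      (fun x => mul_nonneg (Nat.cast_nonneg _) (Real.exp_pos _).le) key ?_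
    exact (summable_pi_prod P g hgnn (fun i => summable_g (α i))).mul_left _
  have : (fun x : Fin P → ℕ => (x j : ℝ) * (w α β F x / Anorm α β F))
      = fun x => ((x j : ℝ) * w α β F x) * (Anorm α β F)⁻¹ := by
    funext x; rw [div_eq_mul_inv]; ring
  rw [this]
  exact hwsum.mul_right _
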